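/- Fix α, β > 0 and n ∈ ℕ. Let A ∈ ℝ^{n×n} be a lower-triangular matrix with |A_{ii}| ≥ α for all i and |A_{ij}| ≤ β for all i, j. Then the least singular value of A satisfies σ_min(A) ≥ (α/2) · (α/(β√n))^n. -/

import Mathlib

/-- The least singular value of a square real matrix:
`σ_min(A) = √(inf_{‖x‖₂ = 1} ‖A x‖₂²)`. -/
noncomputable def sMin (n : ℕ) (A : Matrix (Fin n) (Fin n) ℝ) : ℝ :=
  Real.sqrt (⨅ x : {x : Fin n → ℝ // ∑ i, (x i) ^ 2 = 1}, ∑ i, (A.mulVec x.1 i) ^ 2)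

lemma two_pow_le (n : ℕ) (hn : 0 < n) : (2:ℝ)^n ≤ 2 * (Real.sqrt n)^n := by
  rcases le_or_gt 4 n with h4 | h4
  · have h2 : (2:ℝ) ≤ Real.sqrt n := by
      rw [show (2:ℝ) = Real.sqrt 4 by
        rw [show (4:ℝ) = 2^2 by norm_num, Real.sqrt_sq (by norm_num)]]
      exact Real.sqrt_le_sqrt (by exact_mod_cast h4)
    have := pow_le_pow_left₀ (by norm_num) h2 n
    nlinarith [pow_nonneg (le_trans (by norm_num) h2) n]
  · interval_cases n
    · simp
    · rw [show ((2:ℕ):ℝ) = 2 by norm_num]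
      rw [Real.sq_sqrt (by norm_num)]; norm_num
    · have h3 : (4:ℝ)/3 ≤ Real.sqrt 3 := by
        rw [Real.le_sqrt (by norm_num) (by norm_num)]; norm_num
      have hs : Real.sqrt ((3:ℕ):ℝ) ^ 3 = 3 * Real.sqrt 3 := by
        push_cast
        rw [pow_succ, Real.sq_sqrt (by norm_num)]
      rw [hs]; nlinarith

lemma rec_bound (n : ℕ) (α β M : ℝ) (hα : 0 < α) (hβ : 0 < β) (hM : 0 ≤ M)
    (x : Fin n → ℝ)
    (hstep : ∀ i : Fin n, α * |x i| ≤
      M + β * ∑ j ∈ Finset.univ.filter (fun j : Fin n => (j:ℕ) < i.val), |x j|) :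
    ∀ k : ℕ, β * ∑ j ∈ Finset.univ.filter (fun j : Fin n => (j:ℕ) < k), |x j|
      ≤ M * ((1 + β/α)^k - 1) := by
  intro k
  induction k with
  | zero => simp
  | succ k ih =>
    have hb : (1:ℝ) ≤ 1 + β/α := by
      have : 0 < β/α := div_pos hβ hα; linarith
    by_cases h : k < n
    · have hset : Finset.univ.filter (fun j : Fin n => (j:ℕ) < k + 1)
          = insert ⟨k, h⟩ (Finset.univ.filter (fun j : Fin n => (j:ℕ) < k)) := by
        ext j
        simp only [Finset.mem_filter, Finset.mem_insert, Finset.mem_univ, true_and,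
          Fin.ext_iff]
        omega
      rw [hset, Finset.sum_insert (by simp)]
      have hx := hstep ⟨k, h⟩
      have hSk : 0 ≤ ∑ j ∈ Finset.univ.filter (fun j : Fin n => (j:ℕ) < k), |x j| :=
        Finset.sum_nonneg fun _ _ => abs_nonneg _
      set S := ∑ j ∈ Finset.univ.filter (fun j : Fin n => (j:ℕ) < k), |x j| with hS
      have h2 : β * |x ⟨k, h⟩| ≤ (β/α) * (M + β * S) := by
        rw [div_mul_eq_mul_div, le_div_iff₀ hα]
        nlinarith [mul_le_mul_of_nonneg_left hx hβ.le]
      have h1 : β * (|x ⟨k, h⟩| + S) ≤ (1 + β/α) * (β * S) + (β/α) * M := by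
        nlinarith [div_pos hβ hα]
      calc β * (|x ⟨k, h⟩| + S) ≤ (1 + β/α) * (β * S) + (β/α) * M := h1
        _ ≤ (1 + β/α) * (M * ((1 + β/α)^k - 1)) + (β/α) * M := by
            have := mul_le_mul_of_nonneg_left ih (by linarith : (0:ℝ) ≤ 1 + β/α)
            linarith
        _ = M * ((1 + β/α)^(k+1) - 1) := by ring
    · have hset : Finset.univ.filter (fun j : Fin n => (j:ℕ) < k + 1)
          = Finset.univ.filter (fun j : Fin n => (j:ℕ) < k) := by
        ext j
        simp only [Finset.mem_filter, Finset.mem_univ, true_and]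
        have := j.isLt; omega
      rw [hset]
      refine ih.trans ?_
      have : (1 + β/α)^k ≤ (1 + β/α)^(k+1) := pow_le_pow_right₀ (by linarith) (by omega)
      nlinarith

/-- Fix `α, β > 0` and `n ∈ ℕ`. Let `A ∈ ℝ^{n×n}` be a lower-triangular
matrix with `|A_{ii}| ≥ α` for all `i` and `|A_{ij}| ≤ β` for all `i, j`. Then
`σ_min(A) ≥ (α/2) · (α/(β√n))^n`. -/
theorem lowerTriangular_least_singular_value (α β : ℝ) (hα : 0 < α) (hβ : 0 < β)
    (n : ℕ) (hn : 0 < n) (A : Matrix (Fin n) (Fin n) ℝ)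
    (htri : ∀ i j : Fin n, i < j → A i j = 0)
    (hdiag : ∀ i : Fin n, α ≤ |A i i|)
    (hbound : ∀ i j : Fin n, |A i j| ≤ β) :
    α / 2 * (α / (β * Real.sqrt n)) ^ n ≤ sMin n A := by
  classical
  have hαβ : α ≤ β := le_trans (hdiag ⟨0, hn⟩) (hbound _ _)
  have hsn : 0 < Real.sqrt n := Real.sqrt_pos.mpr (by exact_mod_cast hn)
  set c : ℝ := α / 2 * (α / (β * Real.sqrt n)) ^ n with hc
  have hc0 : 0 < c := by positivity
  have hne : Nonempty {x : Fin n → ℝ // ∑ i, (x i) ^ 2 = 1} := by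
    refine ⟨⟨fun i => if i = ⟨0, hn⟩ then (1:ℝ) else 0, ?_⟩⟩
    have h : ∀ i : Fin n, (if i = (⟨0, hn⟩ : Fin n) then (1:ℝ) else 0) ^ 2
        = if i = ⟨0, hn⟩ then 1 else 0 := fun i => by split <;> norm_num
    simp [h]
  rw [sMin]
  apply Real.le_sqrt_of_sq_le
  refine le_ciInf ?_
  rintro ⟨x, hx⟩
  set y : Fin n → ℝ := A.mulVec x with hy
  set M : ℝ := Real.sqrt (∑ i, y i ^ 2) with hMdef
  have hM0 : 0 ≤ M := Real.sqrt_nonneg _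
  have hM2 : M ^ 2 = ∑ i, y i ^ 2 :=
    Real.sq_sqrt (Finset.sum_nonneg fun _ _ => sq_nonneg _)
  have hyM : ∀ i, |y i| ≤ M := by
    intro i
    rw [← Real.sqrt_sq_eq_abs]
    exact Real.sqrt_le_sqrt
      (Finset.single_le_sum (f := fun i => y i ^ 2) (fun _ _ => sq_nonneg _)
        (Finset.mem_univ i))
  have hstep : ∀ i : Fin n, α * |x i| ≤
      M + β * ∑ j ∈ Finset.univ.filter (fun j : Fin n => (j:ℕ) < i.val), |x j| := by
    intro i
    have hmv : A i i * x i = y i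
        - ∑ j ∈ Finset.univ.filter (fun j : Fin n => (j:ℕ) < i.val), A i j * x j := by
      have hsub : ∑ j ∈ Finset.univ.filter (fun j : Fin n => (j:ℕ) ≤ i.val), A i j * x j
          = ∑ j, A i j * x j := by
        apply Finset.sum_subset (Finset.filter_subset _ _)
        intro j _ hj
        simp only [Finset.mem_filter, Finset.mem_univ, true_and, not_le] at hj
        rw [htri i j (by exact hj), zero_mul]
      have hins : Finset.univ.filter (fun j : Fin n => (j:ℕ) ≤ i.val)
          = insert i (Finset.univ.filter (fun j : Fin n => (j:ℕ) < i.val)) := by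
        ext j
        simp only [Finset.mem_filter, Finset.mem_insert, Finset.mem_univ, true_and,
          Fin.ext_iff]
        omega
      have hyi : y i = ∑ j, A i j * x j := rfl
      rw [hyi, ← hsub, hins, Finset.sum_insert (by simp)]
      ring
    have h1 : α * |x i| ≤ |A i i * x i| := by
      rw [abs_mul]
      exact mul_le_mul_of_nonneg_right (hdiag i) (abs_nonneg _)
    have h3 : |∑ j ∈ Finset.univ.filter (fun j : Fin n => (j:ℕ) < i.val), A i j * x j|
        ≤ β * ∑ j ∈ Finset.univ.filter (fun j : Fin n => (j:ℕ) < i.val), |x j| := by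
      refine (Finset.abs_sum_le_sum_abs _ _).trans ?_
      rw [Finset.mul_sum]
      refine Finset.sum_le_sum fun j _ => ?_
      rw [abs_mul]
      exact mul_le_mul_of_nonneg_right (hbound i j) (abs_nonneg _)
    have h2 : |A i i * x i| ≤ |y i|
        + |∑ j ∈ Finset.univ.filter (fun j : Fin n => (j:ℕ) < i.val), A i j * x j| := by
      rw [hmv]
      exact abs_sub _ _
    linarith [hyM i]
  have hrec := rec_bound n α β M hα hβ hM0 x hstep n
  have huniv : Finset.univ.filter (fun j : Fin n => (j:ℕ) < n) = Finset.univ := by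
    ext j; simp [j.isLt]
  rw [huniv] at hrec
  have hSn1 : 1 ≤ ∑ j, |x j| := by
    have h1 : (1:ℝ) ≤ (∑ j, |x j|) ^ 2 := by
      calc (1:ℝ) = ∑ i, (x i) ^ 2 := hx.symm
        _ = ∑ i, |x i| ^ 2 := by simp [sq_abs]
        _ ≤ (∑ i, |x i|) ^ 2 :=
            Finset.sum_sq_le_sq_sum_of_nonneg fun _ _ => abs_nonneg _
    nlinarith [Finset.sum_nonneg fun j (_ : j ∈ Finset.univ) => abs_nonneg (x j)]
  have hβM : β ≤ M * ((1 + β/α)^n - 1) := by nlinarith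
  have hpow : (1 + β/α)^n - 1 ≤ (2*β/α)^n := by
    have hba : (1:ℝ) ≤ β/α := (one_le_div hα).mpr hαβ
    have h1 : (1:ℝ) + β/α ≤ 2*β/α := by
      rw [mul_div_assoc]; linarith
    have := pow_le_pow_left₀ (by linarith : (0:ℝ) ≤ 1 + β/α) h1 n
    linarith
  have h5 : (0:ℝ) < (2*β/α)^n := by positivity
  have hMlb : β * (α/(2*β))^n ≤ M := by
    have h4 : β ≤ M * (2*β/α)^n := by nlinarith
    rw [← div_le_iff₀ h5] at h4
    calc β * (α/(2*β))^n = β / (2*β/α)^n := by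
          rw [eq_div_iff (ne_of_gt h5), mul_assoc, ← mul_pow]
          field_simp; exact one_pow n
        _ ≤ M := h4
  have hcM : c ≤ M := by
    refine le_trans ?_ hMlb
    have h2s := two_pow_le n hn
    have hs : (0:ℝ) < (Real.sqrt n)^n := pow_pos hsn n
    have key : α * 2^n ≤ β * (2*(Real.sqrt n)^n) := by nlinarith
    calc c = (α^n/β^n) * (α/(2*(Real.sqrt n)^n)) := by
          rw [hc, div_pow, mul_pow]; field_simp
      _ ≤ (α^n/β^n) * (β/2^n) := by
          refine mul_le_mul_of_nonneg_left ?_ (by positivity)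
          rw [div_le_div_iff₀ (by positivity) (by positivity)]
          nlinarith
      _ = β * (α/(2*β))^n := by
          rw [div_pow, mul_pow]; field_simp
  calc c ^ 2 ≤ M ^ 2 := pow_le_pow_left₀ hc0.le hcM 2
    _ = ∑ i, y i ^ 2 := hM2
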